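/- Let n ≥ 1 and consider the dihedral group D_{2n} = ⟨a, b | a^n = b^2 = e, bab^{-1} = a^{-1}⟩ with the class function τ'_k on D_{2n} given by τ'_k(a^i) = η^{ik} + η^{-ik} and τ'_k(b a^i) = 0, where η is a primitive n-th root of unity. Then the symmetric power operations (in the pre-λ-ring of complex class functions on D_{2n} with Adams operations ψ^m(f)(g) = f(g^m)) satisfy S^{2m-1}(τ'_k) = Σ_{i=1}^{m} τ'_{(2i-1)k} and S^{2m}(τ'_k) = Σ_{i=1}^{m} τ'_{2ik} + χ_1 for every m ≥ 1, where χ_1 is the trivial character. -/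

import Mathlib

open PowerSeries

/-- Logarithmic derivative `f ↦ f' · f⁻¹` of a power series (with constant term `1`,
so that `invOfUnit f 1` is a genuine inverse). -/
noncomputable def logDeriv1 {R : Type*} [CommRing R] (f : R⟦X⟧) : R⟦X⟧ :=
  d⁄dX R f * PowerSeries.invOfUnit f 1

/-- A pre-λ-ring: a commutative ring `R` with operations `λ^n` satisfying
`λ^0(r) = 1`, `λ^1 = id` and `λ^n(r+s) = ∑_{i+j=n} λ^i(r) λ^j(s)`. -/
structure PreLambdaRing (R : Type*) [CommRing R] where
  lam : ℕ → R → R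
  lam_zero : ∀ r, lam 0 r = 1
  lam_one : ∀ r, lam 1 r = r
  lam_add : ∀ n r s, lam n (r + s) = ∑ i ∈ Finset.range (n+1), lam i r * lam (n-i) s

/-- The series `λ_t(r) = ∑ λ^i(r) t^i`. -/
noncomputable def lambdaSeries {R : Type*} [CommRing R] (L : PreLambdaRing R) (r : R) : R⟦X⟧ :=
  PowerSeries.mk fun i => L.lam i r

/-- The Adams operations, defined by `∑_{k≥1} ψ^k(r) (-t)^k = -t·(d/dt) log λ_t(r)`;
so `ψ^n(r)` is `(-1)^n` times the `t^n`-coefficient of `-t·(d/dt) log λ_t(r)`. -/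
noncomputable def adams {R : Type*} [CommRing R] (L : PreLambdaRing R) (n : ℕ) (r : R) : R :=
  (-1 : R)^n * coeff n (-(X * logDeriv1 (lambdaSeries L r)))

/-- The symmetric power operations: `S^n(r)` is the `t^n`-coefficient of
`S_t(r) = (λ_{-t}(r))⁻¹`. -/
noncomputable def symPow {R : Type*} [CommRing R] (L : PreLambdaRing R) (n : ℕ) (r : R) : R :=
  coeff n (PowerSeries.invOfUnit (rescale (-1 : R) (lambdaSeries L r)) 1)

/-- The class function `τ'_k` on the dihedral group: `τ'_k(a^i) = η^{ik} + η^{-ik}`,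
`τ'_k(b a^i) = 0`. -/
noncomputable def tauD {n : ℕ} (ζ : ℂ) (k : ℤ) : DihedralGroup n → ℂ
  | DihedralGroup.r i => ζ ^ ((i.val : ℤ) * k) + ζ ^ (-((i.val : ℤ) * k))
  | DihedralGroup.sr _ => 0


variable {R : Type*} [CommRing R] (L : PreLambdaRing R) (r : R)

lemma symPow_zero : symPow L 0 r = 1 := by
  rw [symPow, coeff_zero_eq_constantCoeff_apply, constantCoeff_invOfUnit]
  simp

lemma newton (N : ℕ) (hN : 1 ≤ N) :
    (N : R) * symPow L N r
      = ∑ j ∈ Finset.range N, adams L (j+1) r * symPow L (N-1-j) r := by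
  set A := lambdaSeries L r with hA
  have hA0 : constantCoeff A = 1 := by
    rw [hA, lambdaSeries, constantCoeff_mk, L.lam_zero]
  set B := rescale (-1 : R) A with hB
  have hB0 : constantCoeff B = 1 := by
    rw [hB, ← coeff_zero_eq_constantCoeff_apply, coeff_rescale]
    simpa [coeff_zero_eq_constantCoeff_apply] using hA0
  set S := PowerSeries.invOfUnit B 1 with hS
  have hBS : B * S = 1 := mul_invOfUnit B 1 (by simpa using hB0)
  have hAInv : A * PowerSeries.invOfUnit A 1 = 1 :=
    mul_invOfUnit A 1 (by simpa using hA0)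
  -- derivative of B*S = 1
  have hD : B * d⁄dX R S + S * d⁄dX R B = 0 := by
    have h1 := congrArg (d⁄dX R) hBS
    rw [Derivation.leibniz, smul_eq_mul, smul_eq_mul, Derivation.map_one_eq_zero] at h1
    exact h1
  -- rescale facts
  have hresX : rescale (-1 : R) (X : R⟦X⟧) = -X := by
    ext j
    rw [coeff_rescale, map_neg, coeff_X]
    rcases eq_or_ne j 1 with h | h <;> simp [h]
  have hresD : rescale (-1 : R) (d⁄dX R A) = - d⁄dX R B := by
    ext j
    rw [coeff_rescale, coeff_derivative, map_neg, coeff_derivative, hB, coeff_rescale,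
      pow_succ]
    ring
  have hresInv : rescale (-1 : R) (PowerSeries.invOfUnit A 1) = S := by
    have h1 : B * rescale (-1 : R) (PowerSeries.invOfUnit A 1) = 1 := by
      rw [hB, ← map_mul, hAInv, map_one]
    calc rescale (-1 : R) (PowerSeries.invOfUnit A 1)
        = rescale (-1 : R) (PowerSeries.invOfUnit A 1) * (B * S) := by rw [hBS, mul_one]
      _ = (B * rescale (-1 : R) (PowerSeries.invOfUnit A 1)) * S := by ring
      _ = S := by rw [h1, one_mul]
  have hPsi : rescale (-1 : R) (-(X * logDeriv1 A)) = -(X * (d⁄dX R B * S)) := by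
    rw [logDeriv1, map_neg, map_mul, map_mul, hresX, hresD, hresInv]
    ring
  -- key identity
  have key : X * d⁄dX R S = (PowerSeries.mk fun j => adams L j r) * S := by
    have h2 : d⁄dX R S = (-(d⁄dX R B * S)) * S := by
      calc d⁄dX R S = d⁄dX R S * (B * S) := by rw [hBS, mul_one]
        _ = (B * d⁄dX R S) * S := by ring
        _ = (-(d⁄dX R B * S)) * S := by
            congr 1
            linear_combination hD
    have hmk : (PowerSeries.mk fun j => adams L j r) = -(X * (d⁄dX R B * S)) := by
      rw [← hPsi]
      ext j
      rw [coeff_mk, coeff_rescale, adams]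
    rw [hmk, h2]
    ring
  have hcoeff := congrArg (coeff N) key
  obtain ⟨M, rfl⟩ : ∃ M, N = M + 1 := ⟨N - 1, by omega⟩
  rw [coeff_succ_X_mul, coeff_derivative, coeff_mul] at hcoeff
  rw [Finset.Nat.sum_antidiagonal_eq_sum_range_succ_mk] at hcoeff
  rw [Finset.sum_range_succ'] at hcoeff
  have hpsi0 : adams L 0 r = 0 := by
    rw [adams, pow_zero, one_mul, map_neg, coeff_zero_eq_constantCoeff_apply, map_mul,
      constantCoeff_X, zero_mul, neg_zero]
  simp only [coeff_mk, hpsi0, zero_mul, add_zero] at hcoeff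
  have : ∀ j ∈ Finset.range (M+1), adams L (j+1) r * coeff (M+1-(j+1)) S
      = adams L (j+1) r * symPow L (M+1-1-j) r := by
    intro j hj
    have he : M+1-(j+1) = M+1-1-j := by omega
    rw [symPow, he]
  rw [Finset.sum_congr rfl this] at hcoeff
  rw [symPow, ← hS, mul_comm]
  push_cast at hcoeff ⊢
  exact hcoeff

noncomputable def Hc (u v : ℂ) (N : ℕ) : ℂ := ∑ i ∈ Finset.range (N+1), u^i * v^(N-i)

lemma Hc_zero (u v : ℂ) : Hc u v 0 = 1 := by simp [Hc]

lemma Hc_succ (u v : ℂ) (N : ℕ) : Hc u v (N+1) = u * Hc u v N + v^(N+1) := by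
  rw [Hc, Finset.sum_range_succ']
  simp only [Nat.succ_sub_succ, pow_zero, one_mul, Nat.sub_zero, pow_succ]
  rw [Hc, Finset.mul_sum]
  congr 1
  exact Finset.sum_congr rfl fun i _ => by ring

lemma aux_sum (u v : ℂ) (N : ℕ) :
    Hc u v (N+2) = (∑ j ∈ Finset.range (N+1), u^(j+1) * v^(N+1-j)) + u^(N+2) + v^(N+2) := by
  rw [Hc, Finset.sum_range_succ', Finset.sum_range_succ]
  simp only [Nat.succ_sub_succ, pow_zero, one_mul, Nat.sub_zero, Nat.sub_self]
  ring

lemma Hc_newton (u v : ℂ) : ∀ N : ℕ, 1 ≤ N →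
    (N:ℂ) * Hc u v N = ∑ j ∈ Finset.range N, (u^(j+1)+v^(j+1)) * Hc u v (N-1-j) := by
  have main : ∀ N : ℕ, ((N:ℂ)+1) * Hc u v (N+1)
      = ∑ j ∈ Finset.range (N+1), (u^(j+1)+v^(j+1)) * Hc u v (N+1-1-j) := by
    intro N
    induction N with
    | zero => simp [Hc_succ, Hc_zero]
    | succ N ih =>
      have e1 : ∀ j ∈ Finset.range (N+1),
          (u^(j+1)+v^(j+1)) * Hc u v (N+1+1-1-j)
            = u * ((u^(j+1)+v^(j+1)) * Hc u v (N+1-1-j))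
              + u^(j+1) * v^(N+1-j) + v^(N+2) := by
        intro j hj
        have hj' : j ≤ N := Nat.lt_succ_iff.mp (Finset.mem_range.mp hj)
        have e2 : N+1+1-1-j = (N+1-1-j)+1 := by omega
        have e3 : N+1-1-j+1 = N+1-j := by omega
        rw [e2, Hc_succ, e3]
        have e4 : v^(j+1) * v^(N+1-j) = v^(N+2) := by rw [← pow_add]; congr 1; omega
        linear_combination e4
      rw [Finset.sum_range_succ, Finset.sum_congr rfl e1, Finset.sum_add_distrib,
        Finset.sum_add_distrib, ← Finset.mul_sum, Finset.sum_const, Finset.card_range]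
      have he : N+1+1-1-(N+1) = 0 := by omega
      rw [he, Hc_zero, nsmul_eq_mul]
      have hs := Hc_succ u v (N+1)
      have ha := aux_sum u v N
      simp only [Nat.add_sub_cancel] at ih ⊢
      push_cast
      linear_combination u * ih + ha + ((N:ℂ)+1) * hs
  intro N hN
  obtain ⟨M, rfl⟩ : ∃ M, N = M + 1 := ⟨N-1, by omega⟩
  have := main M
  push_cast at this ⊢
  exact this

lemma Hc_one_neg : ∀ N : ℕ, Hc 1 (-1) N = if Even N then 1 else 0 := by
  intro N
  induction N with
  | zero => simp [Hc_zero]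
  | succ N ih =>
    rw [Hc_succ, ih, one_mul]
    rcases Nat.even_or_odd N with h | h
    · rw [if_pos h, if_neg (by simp [Nat.even_add_one, h]), (h.add_one).neg_one_pow]
      ring
    · rw [if_neg (by simp [Nat.not_even_iff_odd.mpr h]), if_pos (h.add_one), (h.add_one).neg_one_pow]
      ring

lemma Hc_inv (u : ℂ) (hu : u ≠ 0) : ∀ m,
    (Hc u u⁻¹ (2*m) = (∑ i ∈ Finset.range m, (u^(2*i+2) + (u⁻¹)^(2*i+2))) + 1) ∧
    (Hc u u⁻¹ (2*m+1) = ∑ i ∈ Finset.range (m+1), (u^(2*i+1) + (u⁻¹)^(2*i+1))) := by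
  have huv : u * u⁻¹ = 1 := mul_inv_cancel₀ hu
  set v := u⁻¹ with hv
  have key : ∀ (j : ℕ), u * v^(j+1) = v^j := by
    intro j
    rw [pow_succ', ← mul_assoc, huv, one_mul]
  intro m
  induction m with
  | zero =>
    constructor
    · simp [Hc_zero]
    · rw [show 2*0+1 = 0+1 from rfl, Hc_succ, Hc_zero]
      simp [Finset.sum_range_succ]
  | succ m ih =>
    obtain ⟨hE, hO⟩ := ih
    have hE1 : Hc u v (2*(m+1))
        = (∑ i ∈ Finset.range (m+1), (u^(2*i+2) + v^(2*i+2))) + 1 := by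
      have h2 : 2*(m+1) = (2*m+1)+1 := by ring
      rw [h2, Hc_succ, hO]
      have A : u * (∑ i ∈ Finset.range (m+1), (u^(2*i+1) + v^(2*i+1)))
          = (∑ i ∈ Finset.range (m+1), u^(2*i+2)) + ∑ i ∈ Finset.range (m+1), v^(2*i) := by
        rw [Finset.mul_sum, ← Finset.sum_add_distrib]
        refine Finset.sum_congr rfl fun i _ => ?_
        rw [mul_add, key (2*i)]
        rw [show 2*i+2 = (2*i+1)+1 from rfl, pow_succ]
        ring
      have B : (∑ i ∈ Finset.range (m+1), v^(2*i)) + v^(2*m+1+1)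
          = (∑ i ∈ Finset.range (m+1), v^(2*i+2)) + 1 := by
        rw [Finset.sum_range_succ' (fun i => v^(2*i)) m,
          Finset.sum_range_succ (fun i => v^(2*i+2)) m]
        simp only [mul_zero, pow_zero]
        rw [Finset.sum_congr rfl (fun i (_ : i ∈ Finset.range m) => by
          rw [show 2*(i+1) = 2*i+2 from by ring] : ∀ i ∈ Finset.range m, v^(2*(i+1)) = v^(2*i+2))]
        rw [show 2*m+1+1 = 2*m+2 from rfl]
        ring
      have D : (∑ i ∈ Finset.range (m+1), (u^(2*i+2) + v^(2*i+2)))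
          = (∑ i ∈ Finset.range (m+1), u^(2*i+2)) + ∑ i ∈ Finset.range (m+1), v^(2*i+2) :=
        Finset.sum_add_distrib
      linear_combination A + B - D
    refine ⟨hE1, ?_⟩
    show Hc u v (2*(m+1)+1) = ∑ i ∈ Finset.range (m+2), (u^(2*i+1) + v^(2*i+1))
    have h3 : 2*(m+1)+1 = (2*(m+1))+1 := rfl
    rw [h3, Hc_succ, hE1]
    have A' : u * ((∑ i ∈ Finset.range (m+1), (u^(2*i+2) + v^(2*i+2))) + 1)
        = (∑ i ∈ Finset.range (m+1), u^(2*i+3)) + (∑ i ∈ Finset.range (m+1), v^(2*i+1)) + u := by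
      rw [mul_add, mul_one, Finset.mul_sum, ← Finset.sum_add_distrib]
      congr 1
      refine Finset.sum_congr rfl fun i _ => ?_
      rw [mul_add, key (2*i+1)]
      rw [show 2*i+3 = (2*i+2)+1 from rfl, pow_succ]
      ring
    have B' : (∑ i ∈ Finset.range (m+2), u^(2*i+1))
        = (∑ i ∈ Finset.range (m+1), u^(2*i+3)) + u := by
      rw [Finset.sum_range_succ' (fun i => u^(2*i+1)) (m+1)]
      simp only [mul_zero, pow_one, zero_add]
      rw [Finset.sum_congr rfl (fun i (_ : i ∈ Finset.range (m+1)) => by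
        rw [show 2*(i+1)+1 = 2*i+3 from by ring] :
        ∀ i ∈ Finset.range (m+1), u^(2*(i+1)+1) = u^(2*i+3))]
    have C' : (∑ i ∈ Finset.range (m+2), v^(2*i+1))
        = (∑ i ∈ Finset.range (m+1), v^(2*i+1)) + v^(2*(m+1)+1) := by
      rw [Finset.sum_range_succ]
    have D' : (∑ i ∈ Finset.range (m+2), (u^(2*i+1) + v^(2*i+1)))
        = (∑ i ∈ Finset.range (m+2), u^(2*i+1)) + ∑ i ∈ Finset.range (m+2), v^(2*i+1) :=
      Finset.sum_add_distrib
    linear_combination A' - B' - C' - D'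

section Aux

lemma newton_uniq (p S T : ℕ → ℂ) (hS0 : S 0 = 1) (hT0 : T 0 = 1)
    (hS : ∀ N : ℕ, 1 ≤ N → (N:ℂ) * S N = ∑ j ∈ Finset.range N, p (j+1) * S (N-1-j))
    (hT : ∀ N : ℕ, 1 ≤ N → (N:ℂ) * T N = ∑ j ∈ Finset.range N, p (j+1) * T (N-1-j)) :
    ∀ N, S N = T N := by
  intro N
  induction N using Nat.strong_induction_on with
  | _ N ih =>
    match N with
    | 0 => rw [hS0, hT0]
    | (M+1) =>
      have h1 := hS (M+1) (by omega)
      have h2 := hT (M+1) (by omega)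
      have h3 : ∑ j ∈ Finset.range (M+1), p (j+1) * S (M+1-1-j)
          = ∑ j ∈ Finset.range (M+1), p (j+1) * T (M+1-1-j) :=
        Finset.sum_congr rfl fun j hj => by rw [ih (M+1-1-j) (by omega)]
      have h4 : ((M:ℂ)+1) ≠ 0 := by
        have : (0:ℝ) < (M:ℝ) + 1 := by positivity
        intro h
        have := congrArg Complex.re h
        simp at this
        linarith
      push_cast at h1 h2
      exact mul_left_cancel₀ h4 (h1.trans (h3.trans h2.symm))

lemma dihedral_r_pow {n : ℕ} (a : ZMod n) (m : ℕ) :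
    (DihedralGroup.r a : DihedralGroup n) ^ m = DihedralGroup.r ((m : ZMod n) * a) := by
  induction m with
  | zero => rw [pow_zero, Nat.cast_zero, zero_mul, DihedralGroup.one_def]
  | succ m ih =>
    rw [pow_succ, ih, DihedralGroup.r_mul_r]
    congr 1
    push_cast
    ring

lemma dihedral_sr_pow {n : ℕ} (a : ZMod n) (m : ℕ) :
    (DihedralGroup.sr a : DihedralGroup n) ^ m
      = if Even m then 1 else DihedralGroup.sr a := by
  induction m with
  | zero => simp
  | succ m ih =>
    rw [pow_succ, ih]
    rcases Nat.even_or_odd m with h | h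
    · rw [if_pos h, if_neg (by simp [Nat.even_add_one, h]), one_mul]
    · rw [if_neg (Nat.not_even_iff_odd.mpr h), if_pos h.add_one, DihedralGroup.sr_mul_self]

lemma zeta_zpow_val {n : ℕ} (hn : 1 ≤ n) {ζ : ℂ} (hζ : IsPrimitiveRoot ζ n) (c k : ℤ) :
    ζ ^ ((((c : ZMod n)).val : ℤ) * k) = ζ ^ (c * k) := by
  have : NeZero n := ⟨by omega⟩
  have hζ0 : ζ ≠ 0 := hζ.ne_zero (by omega)
  have h1 : ζ ^ (n:ℤ) = 1 := by
    rw [zpow_natCast]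
    exact hζ.pow_eq_one
  have hdvd : (n:ℤ) ∣ (((c : ZMod n)).val : ℤ) - c := by
    rw [← ZMod.intCast_zmod_eq_zero_iff_dvd]
    push_cast [ZMod.natCast_val, ZMod.cast_id]
    ring
  obtain ⟨q, hq⟩ := hdvd
  have h2 : (((c : ZMod n)).val : ℤ) = c + n * q := by linarith
  rw [h2, add_mul, zpow_add₀ hζ0, mul_assoc, zpow_mul ζ (n:ℤ) (q*k), h1, one_zpow, mul_one]

end Aux

/-- For the pre-λ-ring of complex class functions on the dihedral group `D_{2n}` whose
Adams operations are `ψ^m(f)(g) = f(g^m)`: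
`S^{2m-1}(τ'_k) = ∑_{i=1}^m τ'_{(2i-1)k}` and `S^{2m}(τ'_k) = ∑_{i=1}^m τ'_{2ik} + χ₁`. -/
theorem stmt19 (n : ℕ) (hn : 1 ≤ n) (ζ : ℂ) (hζ : IsPrimitiveRoot ζ n) (k : ℤ)
    (L : PreLambdaRing (DihedralGroup n → ℂ))
    (hL : ∀ m, 1 ≤ m → ∀ (f : DihedralGroup n → ℂ) (g : DihedralGroup n),
      adams L m f g = f (g ^ m))
    (m : ℕ) (hm : 1 ≤ m) :
    symPow L (2*m - 1) (tauD ζ k)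
        = (∑ i ∈ Finset.range m, tauD ζ ((2*(i+1) - 1 : ℤ) * k)) ∧
    symPow L (2*m) (tauD ζ k)
        = (∑ i ∈ Finset.range m, tauD ζ ((2*(i+1) : ℤ) * k)) + 1 := by
  have : NeZero n := ⟨by omega⟩
  have hζ0 : ζ ≠ 0 := hζ.ne_zero (by omega)
  have hr : ∀ (a : ZMod n) (j : ℕ),
      tauD (n := n) ζ k ((DihedralGroup.r a) ^ j)
        = (ζ ^ ((a.val:ℤ)*k)) ^ j + ((ζ ^ ((a.val:ℤ)*k))⁻¹) ^ j := by
    intro a j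
    rw [dihedral_r_pow]
    have e0 : (((j:ℤ) * (a.val:ℤ) : ℤ) : ZMod n) = (j : ZMod n) * a := by
      push_cast [ZMod.natCast_val, ZMod.cast_id]
      rfl
    have e2 : ζ ^ (((j:ℤ)*(a.val:ℤ))*k) = (ζ ^ ((a.val:ℤ)*k)) ^ j := by
      rw [show ((j:ℤ)*(a.val:ℤ))*k = ((a.val:ℤ)*k)*(j:ℤ) from by ring, zpow_mul, zpow_natCast]
    show ζ ^ ((((j:ZMod n)*a).val : ℤ) * k) + ζ ^ (-((((j:ZMod n)*a).val : ℤ) * k)) = _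
    rw [zpow_neg, ← e0, zeta_zpow_val hn hζ, e2, inv_pow]
  have hsr : ∀ (a : ZMod n) (j : ℕ),
      tauD (n := n) ζ k ((DihedralGroup.sr a) ^ j) = 1 ^ j + (-1:ℂ) ^ j := by
    intro a j
    rw [dihedral_sr_pow]
    rcases Nat.even_or_odd j with h | h
    · rw [if_pos h, one_pow, h.neg_one_pow, DihedralGroup.one_def]
      show ζ ^ (((0 : ZMod n).val:ℤ)*k) + ζ ^ (-(((0:ZMod n).val:ℤ)*k)) = 1 + 1
      simp [ZMod.val_zero]
    · rw [if_neg (Nat.not_even_iff_odd.mpr h), one_pow, h.neg_one_pow]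
      show (0:ℂ) = 1 + -1
      ring
  have master : ∀ (g : DihedralGroup n) (u v : ℂ),
      (∀ j : ℕ, tauD (n := n) ζ k (g ^ j) = u ^ j + v ^ j) →
      ∀ N, symPow L N (tauD ζ k) g = Hc u v N := by
    intro g u v hg
    refine newton_uniq (fun j => tauD (n:=n) ζ k (g ^ j))
      (fun N => symPow L N (tauD ζ k) g) (Hc u v) ?_ (Hc_zero u v) ?_ ?_
    · show symPow L 0 (tauD ζ k) g = 1
      rw [symPow_zero]; rfl
    · intro N hN
      have h := congrFun (newton L (tauD ζ k) N hN) g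
      rw [Pi.mul_apply, Pi.natCast_apply, Finset.sum_apply] at h
      rw [h]
      refine Finset.sum_congr rfl fun j hj => ?_
      rw [Pi.mul_apply, hL (j+1) (by omega)]
    · intro N hN
      rw [Hc_newton u v N hN]
      refine Finset.sum_congr rfl fun j hj => ?_
      show (u^(j+1)+v^(j+1)) * Hc u v (N-1-j) = tauD (n:=n) ζ k (g^(j+1)) * Hc u v (N-1-j)
      rw [hg (j+1)]
  obtain ⟨m', rfl⟩ : ∃ m', m = m' + 1 := ⟨m - 1, by omega⟩
  constructor
  · funext g
    rw [Finset.sum_apply]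
    cases g with
    | r a =>
      have hu0 : (ζ ^ ((a.val:ℤ)*k)) ≠ 0 := zpow_ne_zero _ hζ0
      have hmm : 2*(m'+1) - 1 = 2*m' + 1 := by omega
      rw [hmm, master _ _ _ (hr a) (2*m'+1), (Hc_inv _ hu0 m').2]
      refine Finset.sum_congr rfl fun i hi => ?_
      show (ζ ^ ((a.val:ℤ)*k)) ^ (2*i+1) + ((ζ ^ ((a.val:ℤ)*k))⁻¹) ^ (2*i+1)
        = ζ ^ ((a.val:ℤ) * ((2*((i:ℤ)+1) - 1)*k)) + ζ ^ (-((a.val:ℤ) * ((2*((i:ℤ)+1) - 1)*k)))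
      have e : (a.val:ℤ) * ((2*((i:ℤ)+1) - 1)*k) = ((a.val:ℤ)*k) * (((2*i+1 : ℕ)):ℤ) := by
        push_cast; ring
      have e2 : ζ ^ (((a.val:ℤ)*k) * (((2*i+1 : ℕ)):ℤ)) = (ζ ^ ((a.val:ℤ)*k)) ^ (2*i+1) := by
        rw [zpow_mul, zpow_natCast]
      rw [e, zpow_neg, e2, inv_pow]
    | sr a =>
      have hmm : 2*(m'+1) - 1 = 2*m' + 1 := by omega
      rw [hmm, master _ _ _ (hsr a) (2*m'+1), Hc_one_neg]
      rw [if_neg (by simp [parity_simps] : ¬ Even (2*m'+1))]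
      exact (Finset.sum_eq_zero fun i _ => rfl).symm
  · funext g
    rw [Pi.add_apply, Pi.one_apply, Finset.sum_apply]
    cases g with
    | r a =>
      have hu0 : (ζ ^ ((a.val:ℤ)*k)) ≠ 0 := zpow_ne_zero _ hζ0
      rw [master _ _ _ (hr a) (2*(m'+1)), (Hc_inv _ hu0 (m'+1)).1]
      congr 1
      refine Finset.sum_congr rfl fun i hi => ?_
      show (ζ ^ ((a.val:ℤ)*k)) ^ (2*i+2) + ((ζ ^ ((a.val:ℤ)*k))⁻¹) ^ (2*i+2)
        = ζ ^ ((a.val:ℤ) * ((2*((i:ℤ)+1))*k)) + ζ ^ (-((a.val:ℤ) * ((2*((i:ℤ)+1))*k)))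
      have e : (a.val:ℤ) * ((2*((i:ℤ)+1))*k) = ((a.val:ℤ)*k) * (((2*i+2 : ℕ)):ℤ) := by
        push_cast; ring
      have e2 : ζ ^ (((a.val:ℤ)*k) * (((2*i+2 : ℕ)):ℤ)) = (ζ ^ ((a.val:ℤ)*k)) ^ (2*i+2) := by
        rw [zpow_mul, zpow_natCast]
      rw [e, zpow_neg, e2, inv_pow]
    | sr a =>
      rw [master _ _ _ (hsr a) (2*(m'+1)), Hc_one_neg]
      rw [if_pos (by simp [parity_simps] : Even (2*(m'+1)))]
      rw [Finset.sum_eq_zero (fun i _ => rfl :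
        ∀ i ∈ Finset.range (m'+1), tauD (n:=n) ζ ((2*((i:ℤ)+1))*k) (DihedralGroup.sr a) = 0)]
      ring
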